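/- Let H be a k-uniform hypergraph with n vertices and m edges, where k ≥ 2 and m ≥ n/k, and let α(H) denote the independence number of H (the maximum size of a set of vertices containing no edge of H). Then α(H) ≥ (1 − 1/k)·⌊((1/k)·(n^k/m))^{1/(k−1)}⌋. -/

import Mathlib

open Finset

lemma descF_le (k : ℕ) : ∀ {t n : ℕ}, t ≤ n →
    Nat.descFactorial t k * n ^ k ≤ t ^ k * Nat.descFactorial n k := by
  induction k with
  | zero => intro t n _; simp
  | succ k ih =>
    intro t n ht
    have h1 : (t - k) * n ≤ t * (n - k) := by
      rcases le_total t k with h | h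
      · simp [Nat.sub_eq_zero_of_le h]
      · have h2 : t * (n - k) = t * n - t * k := by
          rw [mul_comm t (n - k), Nat.sub_mul, mul_comm n t, mul_comm k t]
        rw [h2, Nat.sub_mul]
        exact Nat.sub_le_sub_left (by
          calc t * k = k * t := mul_comm _ _
            _ ≤ k * n := Nat.mul_le_mul_left k ht) _
    rw [Nat.descFactorial_succ, Nat.descFactorial_succ, pow_succ, pow_succ]
    calc (t - k) * Nat.descFactorial t k * (n ^ k * n)
        = ((t - k) * n) * (Nat.descFactorial t k * n ^ k) := by ring
      _ ≤ (t * (n - k)) * (t ^ k * Nat.descFactorial n k) := Nat.mul_le_mul h1 (ih ht)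
      _ = t ^ k * t * ((n - k) * Nat.descFactorial n k) := by ring

lemma count_supsets {V : Type} [Fintype V] [DecidableEq V] (e : Finset V) (t : ℕ)
    (het : e.card ≤ t) :
    ((Finset.powersetCard t (Finset.univ : Finset V)).filter (fun S => e ⊆ S)).card
      = Nat.choose (Fintype.card V - e.card) (t - e.card) := by
  have h1 : (Finset.powersetCard (t - e.card) (Finset.univ \ e)).card
      = Nat.choose (Fintype.card V - e.card) (t - e.card) := by
    rw [Finset.card_powersetCard, Finset.card_sdiff_of_subset (Finset.subset_univ e), Finset.card_univ]
  rw [← h1]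
  apply Finset.card_bij (fun S _ => S \ e)
  · intro S hS
    rw [Finset.mem_filter, Finset.mem_powersetCard] at hS
    obtain ⟨⟨hSu, hSc⟩, heS⟩ := hS
    rw [Finset.mem_powersetCard]
    exact ⟨Finset.sdiff_subset_sdiff hSu (le_refl e), by rw [Finset.card_sdiff_of_subset heS, hSc]⟩
  · intro S₁ h₁ S₂ h₂ heq
    rw [Finset.mem_filter] at h₁ h₂
    rw [← Finset.sdiff_union_of_subset h₁.2, ← Finset.sdiff_union_of_subset h₂.2, heq]
  · intro T hT
    rw [Finset.mem_powersetCard, Finset.subset_sdiff] at hT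
    obtain ⟨⟨hTu, hTd⟩, hTc⟩ := hT
    refine ⟨T ∪ e, ?_, ?_⟩
    · rw [Finset.mem_filter, Finset.mem_powersetCard]
      refine ⟨⟨Finset.subset_univ _, ?_⟩, Finset.subset_union_right⟩
      rw [Finset.card_union_of_disjoint hTd, hTc, Nat.sub_add_cancel het]
    · rw [Finset.union_sdiff_right, Finset.sdiff_eq_self_of_disjoint hTd]

theorem stmt_13 (V : Type) [Fintype V] [DecidableEq V]
    (k n m : ℕ) (hk : 2 ≤ k)
    (E : Finset (Finset V)) (hunif : ∀ e ∈ E, e.card = k)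
    (hn : Fintype.card V = n) (hm : E.card = m)
    (hmn : (n : ℝ) / (k : ℝ) ≤ (m : ℝ)) :
    ∃ I : Finset V, (∀ e ∈ E, ¬e ⊆ I) ∧
      (1 - 1 / (k : ℝ)) *
          (⌊((1 / (k : ℝ)) * ((n : ℝ) ^ k / (m : ℝ))) ^ ((1 : ℝ) / ((k : ℝ) - 1))⌋₊ : ℝ) ≤
        (I.card : ℝ) := by
  classical
  have hk0 : (0:ℝ) < (k:ℝ) := by
    have : 0 < k := by omega
    exact_mod_cast this
  rw [div_le_iff₀ hk0] at hmn
  set y : ℝ := (1 / (k : ℝ)) * ((n : ℝ) ^ k / (m : ℝ)) with hy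
  set x : ℝ := y ^ ((1:ℝ)/((k:ℝ)-1)) with hx
  have hexp : (1:ℝ)/((k:ℝ)-1) ≠ 0 := by
    have : (2:ℝ) ≤ (k:ℝ) := by exact_mod_cast hk
    have : (1:ℝ) ≤ (k:ℝ) - 1 := by linarith
    positivity
  by_cases hm0 : m = 0
  · -- then n = 0, V empty, E empty
    have hE : E = ∅ := Finset.card_eq_zero.mp (by rw [hm, hm0])
    have hn0 : n = 0 := by
      rw [hm0] at hmn
      push_cast at hmn
      have : (n:ℝ) ≤ 0 := by linarith
      exact_mod_cast le_antisymm this (by positivity)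
    have hy0 : y = 0 := by
      rw [hy, hn0, hm0]
      push_cast
      rw [zero_pow (by omega : k ≠ 0)]
      simp
    have hx0 : x = 0 := by rw [hx, hy0, Real.zero_rpow hexp]
    refine ⟨∅, by simp [hE], ?_⟩
    rw [hx0]
    simp
  · -- m ≥ 1
    have hmpos : (0:ℝ) < (m:ℝ) := by
      have : 0 < m := Nat.pos_of_ne_zero hm0
      exact_mod_cast this
    have hy0 : 0 ≤ y := by positivity
    have hx0 : 0 ≤ x := Real.rpow_nonneg hy0 _
    set t := ⌊x⌋₊ with htdef
    have hxpow : x ^ (k-1) = y := by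
      have hk1 : (1:ℝ)/((k:ℝ)-1) = (((k-1 : ℕ):ℝ))⁻¹ := by
        rw [one_div]
        congr 1
        push_cast [Nat.cast_sub (by omega : 1 ≤ k)]
        ring
      rw [hx, hk1, Real.rpow_inv_natCast_pow hy0 (by omega : k-1 ≠ 0)]
    have htpow : (t:ℝ)^(k-1) ≤ y := by
      calc (t:ℝ)^(k-1) ≤ x^(k-1) :=
            pow_le_pow_left₀ (by positivity) (Nat.floor_le hx0) _
        _ = y := hxpow
    have hkmy : (k:ℝ) * m * y = (n:ℝ)^k := by
      rw [hy]; field_simp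
    have hkey : (k:ℝ) * m * (t:ℝ)^(k-1) ≤ (n:ℝ)^k := by
      rw [← hkmy]
      have : (0:ℝ) ≤ (k:ℝ)*m := by positivity
      nlinarith [htpow]
    have htn : t ≤ n := by
      by_cases hn0 : n = 0
      ·
        exfalso
        obtain ⟨e, he⟩ := Finset.card_pos.mp (by rw [hm]; exact Nat.pos_of_ne_zero hm0)
        have h1 : e.card ≤ Fintype.card V := Finset.card_le_card (Finset.subset_univ e) |>.trans
          (by rw [Finset.card_univ])
        rw [hn, hn0, hunif e he] at h1
        omega
      · have hnpos : (0:ℝ) < (n:ℝ) := by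
          have : 0 < n := Nat.pos_of_ne_zero hn0; exact_mod_cast this
        have hyn : y ≤ (n:ℝ)^(k-1) := by
          rw [hy]
          rw [div_mul_eq_mul_div, one_mul, div_div, div_le_iff₀ (by positivity)]
          have hpow : (n:ℝ)^k = (n:ℝ)^(k-1) * n := by
            rw [← pow_succ]; congr 1; omega
          rw [hpow]
          have h2 : (0:ℝ) ≤ (n:ℝ)^(k-1) := by positivity
          calc (n:ℝ)^(k-1) * n ≤ (n:ℝ)^(k-1) * ((m:ℝ)*k) :=
                mul_le_mul_of_nonneg_left hmn h2
            _ = (n:ℝ)^(k-1) * ((m:ℝ)*k) := rfl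
        have : (t:ℝ)^(k-1) ≤ (n:ℝ)^(k-1) := le_trans htpow hyn
        have hle : (t:ℝ) ≤ (n:ℝ) := by
          exact le_of_pow_le_pow_left₀ (by omega : k - 1 ≠ 0) hnpos.le this
        exact_mod_cast hle
    have hmain : ∃ I : Finset V, (∀ e ∈ E, ¬e ⊆ I) ∧ (t:ℝ) - (t:ℝ)/k ≤ (I.card : ℝ) := by
      by_cases htk : t < k
      · -- any t-set is independent
        obtain ⟨S, hS⟩ := (Finset.powersetCard_nonempty (s := (Finset.univ : Finset V)) (n := t)).mpr
          (by rw [Finset.card_univ, hn]; exact htn)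
        rw [Finset.mem_powersetCard] at hS
        refine ⟨S, fun e he hsub => ?_, ?_⟩
        · have : k ≤ t := by
            rw [← hunif e he, ← hS.2]; exact Finset.card_le_card hsub
          omega
        · rw [hS.2]
          have : (0:ℝ) ≤ (t:ℝ)/k := by positivity
          linarith
      · push_neg at htk
        -- main deletion-method case
        set P := Finset.powersetCard t (Finset.univ : Finset V) with hP
        have hPcard : P.card = Nat.choose n t := by
          rw [hP, Finset.card_powersetCard, Finset.card_univ, hn]
        have hPne : P.Nonempty := (Finset.powersetCard_nonempty (s := (Finset.univ : Finset V)) (n := t)).mpr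
          (by rw [Finset.card_univ, hn]; exact htn)
        have hcount : ∀ e ∈ E, (P.filter (fun S => e ⊆ S)).card
            = Nat.choose (n - k) (t - k) := by
          intro e he
          rw [hP, count_supsets e t (by rw [hunif e he]; exact htk), hunif e he, hn]
        have htotal : ∑ S ∈ P, (E.filter (fun e => e ⊆ S)).card
            = m * Nat.choose (n-k) (t-k) := by
          simp_rw [Finset.card_filter]
          rw [Finset.sum_comm]
          have : ∀ e ∈ E, (∑ S ∈ P, if e ⊆ S then 1 else 0)
              = Nat.choose (n-k) (t-k) := by
            intro e he
            rw [← Finset.card_filter]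
            exact hcount e he
          rw [Finset.sum_congr rfl this, Finset.sum_const, smul_eq_mul, hm]
        obtain ⟨S, hSP, hSle⟩ : ∃ S ∈ P,
            (E.filter (fun e => e ⊆ S)).card * Nat.choose n t
              ≤ m * Nat.choose (n-k) (t-k) := by
          apply Finset.exists_le_of_sum_le hPne
          rw [← Finset.sum_mul, htotal, Finset.sum_const, smul_eq_mul, hPcard]
          ring_nf
          exact le_refl _
        have hSmem := Finset.mem_powersetCard.mp hSP
        set F := E.filter (fun e => e ⊆ S) with hF
        set c := F.card with hc
        set D := F.biUnion (fun e => if h : e.Nonempty then {h.choose} else ∅) with hD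
        have hDc : D.card ≤ c := by
          refine le_trans Finset.card_biUnion_le ?_
          calc ∑ e ∈ F, (if h : e.Nonempty then ({h.choose} : Finset V) else ∅).card
              ≤ ∑ _e ∈ F, 1 := Finset.sum_le_sum (fun e _ => by
                split <;> simp)
            _ = c := by rw [Finset.sum_const, smul_eq_mul, mul_one]
        refine ⟨S \ D, ?_, ?_⟩
        · intro e he hsub
          have heS : e ⊆ S := hsub.trans (Finset.sdiff_subset)
          have heF : e ∈ F := Finset.mem_filter.mpr ⟨he, heS⟩
          have hene : e.Nonempty := by
            rw [← Finset.card_pos, hunif e he]; omega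
          have hv : hene.choose ∈ D := Finset.mem_biUnion.mpr
            ⟨e, heF, by rw [dif_pos hene]; exact Finset.mem_singleton_self _⟩
          exact (Finset.mem_sdiff.mp (hsub hene.choose_spec)).2 hv
        · -- cardinality bound
          have hckn : (c:ℝ) * (Nat.choose n t : ℝ)
              ≤ (m:ℝ) * (Nat.choose (n-k) (t-k) : ℝ) := by exact_mod_cast hSle
          have hid : (Nat.choose n t : ℝ) * (Nat.choose t k : ℝ)
              = (Nat.choose n k : ℝ) * (Nat.choose (n-k) (t-k) : ℝ) := by
            exact_mod_cast (Nat.choose_mul (n := n) htk)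
          have hdesc : (Nat.choose t k : ℝ) * (n:ℝ)^k
              ≤ (t:ℝ)^k * (Nat.choose n k : ℝ) := by
            have h1 := descF_le k htn
            rw [Nat.descFactorial_eq_factorial_mul_choose,
              Nat.descFactorial_eq_factorial_mul_choose] at h1
            have hN : Nat.choose t k * n^k ≤ t^k * Nat.choose n k := by
              refine Nat.le_of_mul_le_mul_left ?_ (Nat.factorial_pos k)
              calc Nat.factorial k * (Nat.choose t k * n^k) = Nat.factorial k * Nat.choose t k * n ^ k := by ring
                _ ≤ t ^ k * (Nat.factorial k * Nat.choose n k) := h1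
                _ = Nat.factorial k * (t^k * Nat.choose n k) := by ring
            exact_mod_cast hN
          have ha : (0:ℝ) < (Nat.choose n t : ℝ) := by
            exact_mod_cast Nat.choose_pos htn
          have hd : (0:ℝ) < (Nat.choose n k : ℝ) := by
            exact_mod_cast Nat.choose_pos (htk.trans htn)
          have hnpos : (0:ℝ) < (n:ℝ) := by
            have : 0 < n := by omega
            exact_mod_cast this
          have h2 : (c:ℝ) * (Nat.choose n k : ℝ) ≤ (m:ℝ) * (Nat.choose t k : ℝ) := by
            have h' : (c:ℝ) * (Nat.choose n k : ℝ) * (Nat.choose n t : ℝ)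
                ≤ (m:ℝ) * (Nat.choose t k : ℝ) * (Nat.choose n t : ℝ) := by
              calc (c:ℝ) * (Nat.choose n k : ℝ) * (Nat.choose n t : ℝ)
                  = ((c:ℝ) * (Nat.choose n t : ℝ)) * (Nat.choose n k : ℝ) := by ring
                _ ≤ ((m:ℝ) * (Nat.choose (n-k) (t-k) : ℝ)) * (Nat.choose n k : ℝ) :=
                    mul_le_mul_of_nonneg_right hckn hd.le
                _ = ((Nat.choose n k : ℝ) * (Nat.choose (n-k) (t-k) : ℝ)) * m := by ring
                _ = ((Nat.choose n t : ℝ) * (Nat.choose t k : ℝ)) * m := by rw [← hid]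
                _ = (m:ℝ) * (Nat.choose t k : ℝ) * (Nat.choose n t : ℝ) := by ring
            exact le_of_mul_le_mul_right h' ha
          have h3 : (c:ℝ) * (n:ℝ)^k ≤ (m:ℝ) * (t:ℝ)^k := by
            have hm0' : (0:ℝ) ≤ (m:ℝ) := hmpos.le
            have h' : (c:ℝ) * (n:ℝ)^k * (Nat.choose n k : ℝ)
                ≤ (m:ℝ) * (t:ℝ)^k * (Nat.choose n k : ℝ) := by
              calc (c:ℝ) * (n:ℝ)^k * (Nat.choose n k : ℝ)
                  = ((c:ℝ) * (Nat.choose n k : ℝ)) * (n:ℝ)^k := by ring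
                _ ≤ ((m:ℝ) * (Nat.choose t k : ℝ)) * (n:ℝ)^k :=
                    mul_le_mul_of_nonneg_right h2 (by positivity)
                _ = (m:ℝ) * ((Nat.choose t k : ℝ) * (n:ℝ)^k) := by ring
                _ ≤ (m:ℝ) * ((t:ℝ)^k * (Nat.choose n k : ℝ)) :=
                    mul_le_mul_of_nonneg_left hdesc hm0'
                _ = (m:ℝ) * (t:ℝ)^k * (Nat.choose n k : ℝ) := by ring
            exact le_of_mul_le_mul_right h' hd
          have hpowt : (t:ℝ)^k = (t:ℝ)^(k-1) * t := by
            rw [← pow_succ]; congr 1; omega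
          have hnkpos : (0:ℝ) < (n:ℝ)^k := by positivity
          have h4 : (c:ℝ) * k ≤ (t:ℝ) := by
            have h' : (c:ℝ) * k * (n:ℝ)^k ≤ (t:ℝ) * (n:ℝ)^k := by
              calc (c:ℝ) * k * (n:ℝ)^k = (k:ℝ) * ((c:ℝ) * (n:ℝ)^k) := by ring
                _ ≤ (k:ℝ) * ((m:ℝ) * (t:ℝ)^k) :=
                    mul_le_mul_of_nonneg_left h3 hk0.le
                _ = ((k:ℝ) * m * (t:ℝ)^(k-1)) * t := by rw [hpowt]; ring
                _ ≤ (n:ℝ)^k * t := mul_le_mul_of_nonneg_right hkey (by positivity)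
                _ = (t:ℝ) * (n:ℝ)^k := by ring
            exact le_of_mul_le_mul_right h' hnkpos
          have hck : (c:ℝ) ≤ (t:ℝ)/k := by
            rw [le_div_iff₀ hk0]; exact h4
          have hDt : D.card ≤ t := by
            have h1 : (D.card : ℝ) ≤ (t:ℝ) := by
              have h2 : (D.card : ℝ) ≤ (c:ℝ) := by exact_mod_cast hDc
              have h3 : (t:ℝ)/k ≤ t := by
                apply div_le_self (by positivity)
                have : (1:ℝ) ≤ k := by
                  have : 1 ≤ k := by omega
                  exact_mod_cast this
                exact this
              linarith
            exact_mod_cast h1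
          have hnat : t - D.card ≤ (S \ D).card := by
            rw [← hSmem.2]
            exact Finset.le_card_sdiff D S
          have hcard : (t:ℝ) - (D.card:ℝ) ≤ ((S \ D).card : ℝ) := by
            rw [← Nat.cast_sub hDt]
            exact_mod_cast hnat
          have hDr : (D.card : ℝ) ≤ (t:ℝ)/k := by
            have : (D.card : ℝ) ≤ (c:ℝ) := by exact_mod_cast hDc
            linarith
          linarith
    obtain ⟨I, hI1, hI2⟩ := hmain
    refine ⟨I, hI1, ?_⟩
    calc (1 - 1/(k:ℝ)) * (t:ℝ) = (t:ℝ) - (t:ℝ)/k := by ring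
      _ ≤ (I.card : ℝ) := hI2
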